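/- Let P be a point on a circle of radius R centered at O, and let n ≥ 4 be even. The n points Ã₁,…,Ãₙ obtained as second intersections of n equiangular lines through P with the circle form a regular n-gon, and for each 1 ≤ k ≤ n/2 − 1 the sum of the areas of triangles ÃₖÃₖ₊₁P and Ãₖ₊ₙ⁄₂Ãₖ₊ₙ⁄₂₊₁P equals the sum of the areas of triangles ÃₖÃₖ₊₁O and Ãₖ₊ₙ⁄₂Ãₖ₊ₙ⁄₂₊₁O. -/

import Mathlib

open Real

/-- Area of the triangle `a b c` in the plane `ℂ`: half the absolute value of the cross
product of `b - a` and `c - a`. -/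
noncomputable def triArea (a b c : ℂ) : ℝ :=
  |((b - a) * (starRingEnd ℂ) (c - a)).im| / 2


lemma cross_key (r s x y : ℝ) :
    ((↑s * Complex.exp (↑y * Complex.I) - ↑r * Complex.exp (↑x * Complex.I)) *
      (starRingEnd ℂ) (-↑r * Complex.exp (↑x * Complex.I))).im
      = -(r * s) * Real.sin (y - x) := by
  simp [Complex.exp_mul_I, ← Complex.ofReal_cos, ← Complex.ofReal_sin, Complex.mul_im,
    Complex.mul_re, Complex.sub_re, Complex.sub_im, Real.sin_sub]
  ring

lemma abs_sq_key (r p x y : ℝ) :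
    ‖(↑r * Complex.exp (↑x * Complex.I) + ↑p * Complex.exp (↑y * Complex.I))‖ ^ 2
      = r^2 + p^2 + 2*r*p*Real.cos (x - y) := by
  rw [Complex.sq_norm, Complex.normSq_apply]
  simp [Complex.exp_mul_I, ← Complex.ofReal_cos, ← Complex.ofReal_sin, Complex.add_re,
    Complex.add_im, Complex.mul_re, Complex.mul_im, Real.cos_sub]
  nlinarith [Real.sin_sq_add_cos_sq x, Real.sin_sq_add_cos_sq y]

lemma exp_reflect (x y : ℝ) :
    Complex.exp (↑x * Complex.I) - 2 * ↑(Real.cos (y - x)) * Complex.exp (↑y * Complex.I)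
      = -Complex.exp (↑(2*y - x) * Complex.I) := by
  have h1 : Complex.exp (-(↑(y-x) : ℂ) * Complex.I) * Complex.exp (↑y * Complex.I)
      = Complex.exp (↑x * Complex.I) := by
    rw [← Complex.exp_add]; congr 1; push_cast; ring
  have h2 : Complex.exp ((↑(y-x) : ℂ) * Complex.I) * Complex.exp (↑y * Complex.I)
      = Complex.exp (↑(2*y - x) * Complex.I) := by
    rw [← Complex.exp_add]; congr 1; push_cast; ring
  rw [Complex.ofReal_cos, Complex.cos]
  linear_combination (-1 : ℂ) * h1 - h2

lemma neg_exp (x : ℝ) : -Complex.exp (↑x * Complex.I) = Complex.exp (↑(x + π) * Complex.I) := by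
  rw [Complex.ofReal_add, add_mul, Complex.exp_add, Complex.exp_pi_mul_I]; ring

lemma final_trig (Rr t a : ℝ) :
    (-2*Rr*Real.cos t) * (-2*Rr*Real.cos (t+a)) * Real.sin a / 2
    + (-2*Rr*Real.cos (t+π/2)) * (-2*Rr*Real.cos (t+π/2+a)) * Real.sin a / 2
    = Rr^2 * Real.sin (2*a) / 2 + Rr^2 * Real.sin (2*a) / 2 := by
  have h1 : Real.cos (t+π/2) = -Real.sin t := Real.cos_add_pi_div_two t
  have h2 : t + π/2 + a = (t+a) + π/2 := by ring
  rw [h2, h1, Real.cos_add_pi_div_two (t+a), Real.sin_two_mul]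
  have h3 : Real.cos a = Real.cos ((t+a) - t) := by ring_nf
  rw [Real.cos_sub] at h3
  linear_combination (-2*Rr^2*Real.sin a) * h3

/-- `P` on the circle of radius `R` about `O`, `n ≥ 4` even, and
`Ã k = P + ρ k · e^{i(θ + kπ/n)}` (`ρ k > 0`) the second intersections of the `n`
equiangular lines through `P` with the circle, numbered consecutively (`1 ≤ k ≤ n`).
Then (1) the points `Ã₁, …, Ãₙ` form a regular `n`-gon inscribed in the circle, and
(2) for `1 ≤ k ≤ n/2 − 1`, the areas of triangles `ÃₖÃₖ₊₁P` and `Ãₖ₊ₙ/₂Ãₖ₊ₙ/₂₊₁P`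
sum to the areas of triangles `ÃₖÃₖ₊₁O` and `Ãₖ₊ₙ/₂Ãₖ₊ₙ/₂₊₁O`. -/
theorem baumkuchen_stmt3
    (O P : ℂ) (R : ℝ) (hR : 0 < R) (hP : dist O P = R)
    (n : ℕ) (hn : 4 ≤ n) (hev : Even n) (θ : ℝ) (ρ : ℕ → ℝ) (A : ℕ → ℂ)
    (hA : ∀ k : ℕ, 1 ≤ k → k ≤ n →
      A k = P + (ρ k : ℂ) * Complex.exp ((↑(θ + (k : ℝ) * π / n)) * Complex.I))
    (hρ : ∀ k : ℕ, 1 ≤ k → k ≤ n → 0 < ρ k)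
    (hcirc : ∀ k : ℕ, 1 ≤ k → k ≤ n → dist O (A k) = R) :
    (∃ φ : ℝ, ∀ k : ℕ, 1 ≤ k → k ≤ n →
        A k = O + (R : ℂ) * Complex.exp ((↑(φ + 2 * π * (k : ℝ) / n)) * Complex.I)) ∧
    (∀ k : ℕ, 1 ≤ k → k ≤ n / 2 - 1 →
      triArea (A k) (A (k + 1)) P + triArea (A (k + n / 2)) (A (k + n / 2 + 1)) P =
      triArea (A k) (A (k + 1)) O + triArea (A (k + n / 2)) (A (k + n / 2 + 1)) O) := by
  set ψ := Complex.arg (P - O) with hψdef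
  have hnr0 : (0:ℝ) < n := by positivity
  have hnr4 : (4:ℝ) ≤ n := by exact_mod_cast hn
  have habsPO : ‖P - O‖ = R := by rw [← Complex.dist_eq, dist_comm]; exact hP
  have hPO : P - O = ↑R * Complex.exp (↑ψ * Complex.I) := by
    conv_lhs => rw [← Complex.norm_mul_exp_arg_mul_I (P - O)]
    rw [habsPO]
  have hρeq : ∀ k : ℕ, 1 ≤ k → k ≤ n →
      ρ k = -2 * R * Real.cos (θ + (k:ℝ) * π / n - ψ) := by
    intro k hk1 hk2
    have hAO : A k - O = ↑R * Complex.exp (↑ψ * Complex.I)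
        + ↑(ρ k) * Complex.exp (↑(θ + (k:ℝ) * π / n) * Complex.I) := by
      rw [hA k hk1 hk2, ← hPO]; ring
    have habs : ‖(↑R * Complex.exp (↑ψ * Complex.I)
        + ↑(ρ k) * Complex.exp (↑(θ + (k:ℝ) * π / n) * Complex.I))‖ = R := by
      rw [← hAO, ← Complex.dist_eq, dist_comm]; exact hcirc k hk1 hk2
    have h2 := abs_sq_key R (ρ k) ψ (θ + (k:ℝ) * π / n)
    rw [habs] at h2
    have hcc : Real.cos (ψ - (θ + (k:ℝ)*π/n)) = Real.cos (θ + (k:ℝ)*π/n - ψ) := by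
      rw [← Real.cos_neg]; ring_nf
    rw [hcc] at h2
    have hk0 := hρ k hk1 hk2
    have hz : ρ k * (ρ k + 2*R*Real.cos (θ + (k:ℝ)*π/n - ψ)) = 0 := by linear_combination -h2
    rcases mul_eq_zero.mp hz with h|h
    · exact absurd h (ne_of_gt hk0)
    · linarith
  have hmain : ∀ k : ℕ, 1 ≤ k → k ≤ n →
      A k = O + (R:ℂ) * Complex.exp (↑((2*θ - ψ + π) + 2 * π * (k:ℝ) / n) * Complex.I) := by
    intro k hk1 hk2
    have hPeq : P = O + ↑R * Complex.exp (↑ψ * Complex.I) := by rw [← hPO]; ring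
    have h1 : A k = O + ↑R * Complex.exp (↑(2*(θ + (k:ℝ)*π/n) - ψ + π) * Complex.I) := by
      rw [hA k hk1 hk2, hρeq k hk1 hk2, hPeq,
        ← neg_exp (2*(θ + (k:ℝ)*π/n) - ψ), ← exp_reflect ψ (θ + (k:ℝ)*π/n)]
      push_cast
      ring
    rw [show (2*(θ + (k:ℝ)*π/n) - ψ + π) = ((2*θ - ψ + π) + 2*π*(k:ℝ)/n) from by ring] at h1
    exact h1
  refine ⟨⟨2*θ - ψ + π, hmain⟩, ?_⟩
  intro k hk1 hk2
  obtain ⟨m, hm⟩ := hev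
  have hn2 : n / 2 = m := by omega
  rw [hn2]
  have hb1 : 1 ≤ k := hk1
  have hb2 : k + 1 ≤ n := by omega
  have hb3 : 1 ≤ k + m := by omega
  have hb4 : k + m + 1 ≤ n := by omega
  have hsp : 0 < Real.sin (π/n) :=
    Real.sin_pos_of_pos_of_lt_pi (by positivity) (by
      rw [div_lt_iff₀ hnr0]; nlinarith [Real.pi_pos])
  have hsp2 : 0 < Real.sin (2*π/n) :=
    Real.sin_pos_of_pos_of_lt_pi (by positivity) (by
      rw [div_lt_iff₀ hnr0]; nlinarith [Real.pi_pos])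
  have hAreaP : ∀ j : ℕ, 1 ≤ j → j + 1 ≤ n →
      triArea (A j) (A (j+1)) P = ρ j * ρ (j+1) * Real.sin (π/n) / 2 := by
    intro j hj1 hj2
    have hj2' : j ≤ n := by omega
    have hj1' : 1 ≤ j + 1 := by omega
    have hbma : A (j+1) - A j
        = ↑(ρ (j+1)) * Complex.exp (↑(θ + ((j+1:ℕ):ℝ) * π / n) * Complex.I)
        - ↑(ρ j) * Complex.exp (↑(θ + (j:ℝ) * π / n) * Complex.I) := by
      rw [hA (j+1) hj1' hj2, hA j hj1 hj2']; ring
    have hcma : P - A j = -↑(ρ j) * Complex.exp (↑(θ + (j:ℝ) * π / n) * Complex.I) := by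
      rw [hA j hj1 hj2']; ring
    rw [triArea, hbma, hcma, cross_key]
    rw [show (θ + ((j+1:ℕ):ℝ) * π / n) - (θ + (j:ℝ) * π / n) = π/n from by push_cast; ring]
    rw [abs_of_nonpos (by nlinarith [mul_pos (mul_pos (hρ j hj1 hj2') (hρ (j+1) hj1' hj2)) hsp])]
    ring
  have hAreaO : ∀ j : ℕ, 1 ≤ j → j + 1 ≤ n →
      triArea (A j) (A (j+1)) O = R^2 * Real.sin (2*π/n) / 2 := by
    intro j hj1 hj2
    have hj2' : j ≤ n := by omega
    have hj1' : 1 ≤ j + 1 := by omega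
    have hbma : A (j+1) - A j
        = ↑R * Complex.exp (↑((2*θ - ψ + π) + 2 * π * ((j+1:ℕ):ℝ) / n) * Complex.I)
        - ↑R * Complex.exp (↑((2*θ - ψ + π) + 2 * π * (j:ℝ) / n) * Complex.I) := by
      rw [hmain (j+1) hj1' hj2, hmain j hj1 hj2']; ring
    have hcma : O - A j
        = -↑R * Complex.exp (↑((2*θ - ψ + π) + 2 * π * (j:ℝ) / n) * Complex.I) := by
      rw [hmain j hj1 hj2']; ring
    rw [triArea, hbma, hcma, cross_key]
    rw [show ((2*θ - ψ + π) + 2 * π * ((j+1:ℕ):ℝ) / n) - ((2*θ - ψ + π) + 2 * π * (j:ℝ) / n)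
        = 2*π/n from by push_cast; ring]
    rw [abs_of_nonpos (by nlinarith [mul_pos (mul_pos hR hR) hsp2])]
    ring
  rw [hAreaP k hb1 hb2, hAreaP (k+m) hb3 hb4, hAreaO k hb1 hb2, hAreaO (k+m) hb3 hb4]
  rw [hρeq k hb1 (by omega), hρeq (k+1) (by omega) hb2,
    hρeq (k+m) hb3 (by omega), hρeq (k+m+1) (by omega) hb4]
  have hnr : (n:ℝ) = 2*m := by rw [hm]; push_cast; ring
  have hmne : (m:ℝ) ≠ 0 := by
    have : (0:ℕ) < m := by omega
    exact_mod_cast this.ne'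
  have e1 : θ + ((k+1:ℕ):ℝ)*π/n - ψ = (θ + (k:ℝ)*π/n - ψ) + π/n := by push_cast; ring
  have e2 : θ + ((k+m:ℕ):ℝ)*π/n - ψ = (θ + (k:ℝ)*π/n - ψ) + π/2 := by
    rw [hnr]; push_cast; field_simp; ring
  have e3 : θ + ((k+m+1:ℕ):ℝ)*π/n - ψ = (θ + (k:ℝ)*π/n - ψ) + π/2 + π/n := by
    rw [hnr]; push_cast; field_simp; ring
  have e4 : Real.sin (2*π/n) = Real.sin (2*(π/n)) := by congr 1; ring
  rw [e1, e2, e3, e4]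
  exact final_trig R (θ + (k:ℝ)*π/n - ψ) (π/n)
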